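/- Let N, K ≥ 1, let π, λ₀ ∈ ℂ and κ ∈ ℂ^K (viewed as a K×1 column matrix), and set Δ = exp(π + conj(π)) + κ*κ (a positive real number). Let D be the N×N diagonal matrix with (1,1) entry exp(π) and all other diagonal entries 1, let C be the K×N matrix whose first column is κ and whose other columns vanish, and let H = fromBlocks D (−(D*)⁻¹·C*) C I_K and Λ = fromBlocks (λ₀·I_N) 0 0 (conj(λ₀)·I_K). Then H is invertible and H·Λ·H⁻¹ = (1/Δ)·S, where S is the (N+K)×(N+K) matrix whose top-left N×N block is the diagonal matrix with (1,1) entry conj(λ₀)·Δ + (λ₀ − conj(λ₀))·exp(π + conj(π)) and remaining diagonal entries λ₀·Δ; whose top-right N×K block has first row (λ₀ − conj(λ₀))·exp(π)·κ* and all other rows zero; whose bottom-left K×N block has first column (λ₀ − conj(λ₀))·exp(conj(π))·κ and all other columns zero; and whose bottom-right K×K block is conj(λ₀)·Δ·I_K + (λ₀ − conj(λ₀))·κ·κ*. -/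

import Mathlib

open Matrix Complex

/-- The conjugation `H Λ H⁻¹` when `ρ_α = 0`, `l_α = 1`. -/
theorem stmt_15 (N K : ℕ) (hN : 1 ≤ N) (hK : 1 ≤ K)
    (π₀ lam0 : ℂ) (κ : Matrix (Fin K) (Fin 1) ℂ)
    (Δ : ℂ) (hΔ : Δ = Complex.exp (π₀ + starRingEnd ℂ π₀) + (κᴴ * κ) 0 0)
    (D : Matrix (Fin N) (Fin N) ℂ)
    (hD : D = Matrix.diagonal fun i : Fin N =>
      if (i : ℕ) = 0 then Complex.exp π₀ else 1)
    (C : Matrix (Fin K) (Fin N) ℂ)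
    (hC : ∀ i j, C i j = if (j : ℕ) = 0 then κ i 0 else 0)
    (H : Matrix (Fin N ⊕ Fin K) (Fin N ⊕ Fin K) ℂ)
    (hH : H = Matrix.fromBlocks D (-((Dᴴ)⁻¹ * Cᴴ)) C (1 : Matrix (Fin K) (Fin K) ℂ))
    (Λ : Matrix (Fin N ⊕ Fin K) (Fin N ⊕ Fin K) ℂ)
    (hΛ : Λ = Matrix.fromBlocks (lam0 • (1 : Matrix (Fin N) (Fin N) ℂ)) 0 0
      (starRingEnd ℂ lam0 • (1 : Matrix (Fin K) (Fin K) ℂ)))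
    (S : Matrix (Fin N ⊕ Fin K) (Fin N ⊕ Fin K) ℂ)
    (hS : S = Matrix.fromBlocks
      (Matrix.diagonal fun i : Fin N => if (i : ℕ) = 0 then
          starRingEnd ℂ lam0 * Δ
            + (lam0 - starRingEnd ℂ lam0) * Complex.exp (π₀ + starRingEnd ℂ π₀)
        else lam0 * Δ)
      (Matrix.of fun (i : Fin N) (k : Fin K) => if (i : ℕ) = 0 then
          (lam0 - starRingEnd ℂ lam0) * Complex.exp π₀ * starRingEnd ℂ (κ k 0)
        else 0)
      (Matrix.of fun (k : Fin K) (j : Fin N) => if (j : ℕ) = 0 then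
          (lam0 - starRingEnd ℂ lam0) * Complex.exp (starRingEnd ℂ π₀) * κ k 0
        else 0)
      ((starRingEnd ℂ lam0 * Δ) • (1 : Matrix (Fin K) (Fin K) ℂ)
        + (lam0 - starRingEnd ℂ lam0) • (κ * κᴴ))) :
    IsUnit H ∧ H * Λ * H⁻¹ = Δ⁻¹ • S := by
  set e := Complex.exp π₀ with he
  set eb := Complex.exp (starRingEnd ℂ π₀) with heb
  have hebne : eb ≠ 0 := Complex.exp_ne_zero _
  have hene : e ≠ 0 := Complex.exp_ne_zero _
  have hE : Complex.exp (π₀ + starRingEnd ℂ π₀) = e * eb := Complex.exp_add _ _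
  have hκn : (κᴴ * κ) 0 0 = ∑ k : Fin K, starRingEnd ℂ (κ k 0) * κ k 0 := by
    simp [Matrix.mul_apply, Matrix.conjTranspose_apply]
  have hone : ∀ j : Fin N, ((j : ℕ) = 0) ↔ (j = (⟨0, hN⟩ : Fin N)) := fun j => by
    simp [Fin.ext_iff]
  have hΔ0 : Δ ≠ 0 := by
    rw [hΔ, hκn]
    have h1 : π₀ + starRingEnd ℂ π₀ = ((2 * π₀.re : ℝ) : ℂ) := by
      rw [Complex.add_conj]; try push_cast
    have h2 : (∑ k : Fin K, starRingEnd ℂ (κ k 0) * κ k 0)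
        = ((∑ k : Fin K, Complex.normSq (κ k 0) : ℝ) : ℂ) := by
      push_cast [← Complex.normSq_eq_conj_mul_self]; rfl
    rw [h1, h2, ← Complex.ofReal_exp, ← Complex.ofReal_add, Ne, Complex.ofReal_eq_zero]
    have := Real.exp_pos (2 * π₀.re)
    have h3 : (0:ℝ) ≤ ∑ k : Fin K, Complex.normSq (κ k 0) :=
      Finset.sum_nonneg fun k _ => Complex.normSq_nonneg _
    linarith
  have hDH : Dᴴ = Matrix.diagonal (fun i : Fin N => if (i : ℕ) = 0 then eb else 1) := by
    ext i j
    rw [hD, Matrix.conjTranspose_apply]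
    by_cases hij : i = j
    · subst hij
      by_cases h : (i : ℕ) = 0 <;> simp [h, he, heb, ← Complex.exp_conj]
    · rw [Matrix.diagonal_apply_ne _ fun hh => hij hh.symm, Matrix.diagonal_apply_ne _ hij]
      simp
  have hDHinv : (Dᴴ)⁻¹
      = Matrix.diagonal (fun i : Fin N => if (i : ℕ) = 0 then eb⁻¹ else 1) := by
    apply Matrix.inv_eq_right_inv
    rw [hDH]
    ext i j
    rw [Matrix.diagonal_mul_diagonal]
    by_cases hij : i = j
    · subst hij
      rw [Matrix.diagonal_apply_eq, Matrix.one_apply_eq]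
      by_cases h : (i : ℕ) = 0 <;> simp [h, hebne]
    · rw [Matrix.diagonal_apply_ne _ hij, Matrix.one_apply_ne hij]
  have hC' : C = Matrix.of fun (i : Fin K) (j : Fin N) =>
      if (j : ℕ) = 0 then κ i 0 else 0 := by
    ext i j; simp [hC]
  have hB : -((Dᴴ)⁻¹ * Cᴴ) = Matrix.of fun (j : Fin N) (k : Fin K) =>
      if (j : ℕ) = 0 then -(eb⁻¹ * starRingEnd ℂ (κ k 0)) else 0 := by
    rw [hDHinv, hC']
    ext j k
    rw [Matrix.neg_apply, Matrix.diagonal_mul, Matrix.of_apply]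
    rw [Matrix.conjTranspose_apply, Matrix.of_apply]
    by_cases h : (j : ℕ) = 0 <;> simp [h]
  have hKK : κ * κᴴ = Matrix.of fun (k k' : Fin K) =>
      κ k 0 * starRingEnd ℂ (κ k' 0) := by
    ext k k'
    simp [Matrix.mul_apply, Matrix.conjTranspose_apply, Fin.sum_univ_one]
  -- Schur complement is diagonal
  have hSchur : D - -((Dᴴ)⁻¹ * Cᴴ) * C
      = Matrix.diagonal (fun i : Fin N => if (i : ℕ) = 0 then eb⁻¹ * Δ else 1) := by
    rw [hB, hC', hD]
    ext i j
    rw [Matrix.sub_apply, Matrix.mul_apply]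
    by_cases hij : i = j
    · subst hij
      by_cases h : (i : ℕ) = 0
      · simp only [Matrix.diagonal_apply_eq, h, if_true, Matrix.of_apply]
        rw [hΔ, hκn, hE]
        have hs : ∑ k : Fin K, -(eb⁻¹ * starRingEnd ℂ (κ k 0)) * κ k 0
            = -(eb⁻¹ * ∑ k : Fin K, starRingEnd ℂ (κ k 0) * κ k 0) := by
          simp only [Finset.mul_sum, ← Finset.sum_neg_distrib]
          exact Finset.sum_congr rfl fun k _ => by ring
        rw [hs]
        field_simp
        try ring
      · simp only [Matrix.diagonal_apply_eq, h, if_false, Matrix.of_apply]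
        simp
    · rw [Matrix.diagonal_apply_ne _ hij, Matrix.diagonal_apply_ne _ hij]
      by_cases h : (j : ℕ) = 0
      · have hi0 : ¬ (i : ℕ) = 0 := fun hi => hij (Fin.ext (hi.trans h.symm))
        simp only [Matrix.of_apply, hi0, if_false, zero_mul, Finset.sum_const_zero, sub_zero]
      · simp only [Matrix.of_apply, h, if_false, mul_zero, Finset.sum_const_zero, sub_zero]
  have hU : IsUnit H := by
    rw [hH, Matrix.isUnit_iff_isUnit_det, Matrix.det_fromBlocks_one₂₂, hSchur,
      Matrix.det_diagonal, isUnit_iff_ne_zero]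
    exact Finset.prod_ne_zero_iff.2 fun i _ => by
      by_cases h : (i : ℕ) = 0 <;> simp [h, hebne, hΔ0]
  refine ⟨hU, ?_⟩
  set cl := starRingEnd ℂ lam0 with hcl
  have key : S * H = Δ • (H * Λ) := by
    rw [hS, hH, hΛ, hB, hC', hD, hKK, Matrix.fromBlocks_multiply, Matrix.fromBlocks_multiply,
      Matrix.fromBlocks_smul, Matrix.fromBlocks_inj]
    refine ⟨?_, ?_, ?_, ?_⟩
    · -- block (1,1)
      rw [Matrix.mul_zero, add_zero, Matrix.mul_smul, Matrix.mul_one,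
        Matrix.diagonal_mul_diagonal]
      ext i j
      rw [Matrix.add_apply, Matrix.smul_apply, Matrix.smul_apply, Matrix.mul_apply]
      by_cases hij : i = j
      · subst hij
        rw [Matrix.diagonal_apply_eq, Matrix.diagonal_apply_eq]
        try simp only [Pi.mul_apply]
        by_cases h : (i : ℕ) = 0
        · simp only [Matrix.of_apply, h, if_true]
          rw [hΔ, hκn, hE]
          have hs : ∑ k : Fin K,
              (lam0 - cl) * e * starRingEnd ℂ (κ k 0) * κ k 0
              = (lam0 - cl) * e * ∑ k : Fin K, starRingEnd ℂ (κ k 0) * κ k 0 := by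
            rw [Finset.mul_sum]
            exact Finset.sum_congr rfl fun k _ => by ring
          rw [hs]
          simp only [smul_eq_mul]
          ring
        · simp only [Matrix.of_apply, h, if_false, mul_zero, Finset.sum_const_zero, add_zero]
          simp only [smul_eq_mul]
          ring
      · rw [Matrix.diagonal_apply_ne _ hij, Matrix.diagonal_apply_ne _ hij]
        by_cases h : (j : ℕ) = 0
        · have hi0 : ¬ (i : ℕ) = 0 := fun hi => hij (Fin.ext (hi.trans h.symm))
          simp [hi0, h]
        · simp [h]
    · -- block (1,2)
      rw [Matrix.mul_zero, zero_add, Matrix.mul_one, Matrix.mul_smul, Matrix.mul_one]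
      ext i k
      rw [Matrix.add_apply, Matrix.smul_apply, Matrix.smul_apply, Matrix.diagonal_mul]
      by_cases h : (i : ℕ) = 0
      · simp only [Matrix.of_apply, h, if_true]
        rw [hΔ, hκn, hE]
        field_simp
        linear_combination ((starRingEnd ℂ) (κ k 0) * cl * e * eb + (starRingEnd ℂ) (κ k 0) * cl * ∑ x, (starRingEnd ℂ) (κ x 0) * κ x 0) * mul_inv_cancel₀ hebne
      · simp [h]
    · -- block (2,1)
      rw [Matrix.mul_zero, add_zero, Matrix.mul_smul, Matrix.mul_one,
        Matrix.add_mul, Matrix.smul_mul, Matrix.smul_mul, Matrix.one_mul]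
      ext k j
      rw [Matrix.add_apply, Matrix.add_apply, Matrix.smul_apply, Matrix.smul_apply,
        Matrix.smul_apply, Matrix.mul_diagonal, Matrix.mul_apply]
      by_cases h : (j : ℕ) = 0
      · simp only [Matrix.of_apply, Matrix.smul_apply, smul_eq_mul, h, if_true]
        rw [hΔ, hκn, hE]
        have hs : ∑ k' : Fin K, κ k 0 * starRingEnd ℂ (κ k' 0) * κ k' 0
            = κ k 0 * ∑ k' : Fin K, starRingEnd ℂ (κ k' 0) * κ k' 0 := by
          rw [Finset.mul_sum]
          exact Finset.sum_congr rfl fun k' _ => by ring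
        rw [hs]
        ring
      · simp [h]
    · -- block (2,2)
      rw [Matrix.mul_zero, zero_add, Matrix.mul_one, Matrix.one_mul]
      ext k k'
      rw [Matrix.add_apply, Matrix.add_apply, Matrix.smul_apply, Matrix.smul_apply,
        Matrix.smul_apply, Matrix.smul_apply, Matrix.mul_apply]
      have hs : ∑ j : Fin N,
          (if (j : ℕ) = 0 then (lam0 - cl) * eb * κ k 0 else 0)
            * (Matrix.of fun (j : Fin N) (k : Fin K) =>
                if (j : ℕ) = 0 then -(eb⁻¹ * starRingEnd ℂ (κ k 0)) else 0) j k'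
          = (lam0 - cl) * eb * κ k 0 * -(eb⁻¹ * starRingEnd ℂ (κ k' 0)) := by
        simp only [Matrix.of_apply, ite_mul, zero_mul, mul_ite, mul_zero, hone,
          Finset.sum_ite_eq', Finset.mem_univ, if_true]
      simp only [Matrix.of_apply] at hs ⊢
      rw [hs]
      simp only [smul_eq_mul]
      field_simp
      ring
  have hHL : H * Λ = Δ⁻¹ • (S * H) := by
    rw [key, smul_smul, inv_mul_cancel₀ hΔ0, one_smul]
  rw [hHL, Matrix.smul_mul, Matrix.mul_assoc,
    Matrix.mul_nonsing_inv _ ((Matrix.isUnit_iff_isUnit_det H).1 hU), Matrix.mul_one]
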